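/- The counterexample instance admits a feasible solution of cost 9 in which robot 1 sprays the full capacity on edge {2,3}: robot 1 follows the closed walk 1–2–3–1 (length 3) and sprays 8 on {2,3}; robot 2 follows the closed walk 1–2–3–4–1–3–1 (length 6) and sprays 1 on {1,2}, 4 on {2,3}, 1 on {3,4}, 1 on {1,4}, and 1 on {1,3}. Hence the minimum cost among feasible solutions with some robot spraying exactly 8 on edge {2,3} is attained and equals 9. -/

import Mathlib

/-- The counterexample graph of the paper's Theorem 2: the 4-cycle `0-1-2-3-0` together
with the chord `{0,2}` (vertices `0,1,2,3` stand for the paper's vertices `1,2,3,4`;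
the depot is vertex `0`; the missing edge `{1,3}` is the paper's `{2,4}`). -/
def CG : SimpleGraph (Fin 4) where
  Adj a b := a ≠ b ∧ s(a, b) ≠ s(1, 3)
  symm := by
    constructor
    intro a b h
    exact ⟨h.1.symm, by rw [Sym2.eq_swap]; exact h.2⟩
  loopless := by
    constructor
    intro a h
    exact h.1 rfl

instance : DecidableRel CG.Adj := fun a b =>
  decidable_of_iff (a ≠ b ∧ s(a, b) ≠ s(1, 3)) Iff.rfl

/-- Demands: `12` on the edge `{1,2}` (the paper's `{2,3}`) and `1` on every other edge. -/
noncomputable def Dem : Sym2 (Fin 4) → ℝ := fun e => if e = s(1, 2) then 12 else 1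

/-- A feasible solution: a finite family of closed walks at the depot `0` together with
nonnegative sprays `y r e`, where `y r e > 0` only if robot `r`'s walk traverses `e`,
each robot sprays at most the capacity `8` in total, and the total spray on each edge
equals its demand. -/
def Feasible {R : ℕ} (walk : Fin R → CG.Walk 0 0)
    (y : Fin R → Sym2 (Fin 4) → ℝ) : Prop :=
  (∀ r e, 0 ≤ y r e) ∧
  (∀ r e, 0 < y r e → e ∈ (walk r).edges) ∧
  (∀ r, ∑ e ∈ CG.edgeFinset, y r e ≤ 8) ∧
  (∀ e ∈ CG.edgeSet, ∑ r, y r e = Dem e)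

/-- Robot 1's walk `1–2–3–1` of the paper (here `0-1-2-0`). -/
def walk₁ : CG.Walk 0 0 :=
  .cons (u := 0) (v := 1) (by decide)
    (.cons (v := 2) (by decide) (.cons (by decide) .nil))

/-- Robot 2's walk `1–2–3–4–1–3–1` of the paper (here `0-1-2-3-0-2-0`). -/
def walk₂ : CG.Walk 0 0 :=
  .cons (u := 0) (v := 1) (by decide)
    (.cons (v := 2) (by decide) (.cons (v := 3) (by decide) (.cons (v := 0) (by decide)
      (.cons (v := 2) (by decide) (.cons (by decide) .nil)))))

/-- Robot 1's sprays: the full capacity `8` on the paper's edge `{2,3}` (here `{1,2}`). -/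
noncomputable def spray₁ : Sym2 (Fin 4) → ℝ := fun e => if e = s(1, 2) then 8 else 0

/-- Robot 2's sprays: `1` on `{1,2}`, `4` on `{2,3}`, `1` on `{3,4}`, `1` on `{1,4}`
and `1` on `{1,3}` of the paper (here `{0,1}`, `{1,2}`, `{2,3}`, `{0,3}`, `{0,2}`). -/
noncomputable def spray₂ : Sym2 (Fin 4) → ℝ := fun e =>
  if e = s(0, 1) then 1 else if e = s(1, 2) then 4
    else if e = s(2, 3) then 1 else if e = s(0, 3) then 1
      else if e = s(0, 2) then 1 else 0


lemma mem_edgeSet_cases' : ∀ x ∈ CG.edgeSet,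
    x = s(0,1) ∨ x = s(1,2) ∨ x = s(2,3) ∨ x = s(0,3) ∨ x = s(0,2) := by decide

lemma counts_aux (l : List (Sym2 (Fin 4))) (h : ∀ x ∈ l, x ∈ CG.edgeSet) :
    l.length = l.count s(0,1) + l.count s(1,2) + l.count s(2,3) + l.count s(0,3) + l.count s(0,2) ∧
    l.countP (fun e => decide ((0:Fin 4) ∈ e)) = l.count s(0,1) + l.count s(0,3) + l.count s(0,2) ∧
    l.countP (fun e => decide ((1:Fin 4) ∈ e)) = l.count s(0,1) + l.count s(1,2) ∧
    l.countP (fun e => decide ((2:Fin 4) ∈ e)) = l.count s(1,2) + l.count s(2,3) + l.count s(0,2) := by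
  induction l with
  | nil => simp
  | cons x xs ih =>
    obtain ⟨h1, h2, h3, h4⟩ := ih (fun a ha => h a (List.mem_cons_of_mem _ ha))
    rcases mem_edgeSet_cases' x (h x List.mem_cons_self) with rfl | rfl | rfl | rfl | rfl <;>
      simp [List.count_cons, List.countP_cons, h1, h2, h3, h4] <;> omega

lemma countP_parity (v : Fin 4) : ∀ {a b : Fin 4} (w : CG.Walk a b),
    (w.edges.countP (fun e => decide (v ∈ e)) + (if a = v then 1 else 0)
      + (if b = v then 1 else 0)) % 2 = 0 := by
  intro a b w
  induction w with
  | nil =>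
    simp only [SimpleGraph.Walk.edges_nil, List.countP_nil]
    split_ifs <;> rfl
  | @cons a c b h p ih =>
    rw [SimpleGraph.Walk.edges_cons, List.countP_cons]
    have hac : a ≠ c := h.1
    simp only [decide_eq_true_eq, Sym2.mem_iff]
    split_ifs at ih ⊢ <;> simp_all <;> omega

/-- A closed walk at `0` with a nonempty edge list uses an edge at `0`. -/
lemma countP_zero_pos (w : CG.Walk 0 0) (h : w.edges ≠ []) :
    0 < w.edges.countP (fun e => decide ((0:Fin 4) ∈ e)) := by
  cases w with
  | nil => simp at h
  | cons hadj p =>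
    rw [List.countP_pos_iff]
    exact ⟨_, List.mem_cons_self, by simp [Sym2.mem_iff]⟩

lemma lower_bound {R : ℕ} (walk : Fin R → CG.Walk 0 0) (y : Fin R → Sym2 (Fin 4) → ℝ)
    (hf : Feasible walk y) (r₀ : Fin R) (h8 : y r₀ s(1, 2) = 8) :
    9 ≤ ∑ r, (walk r).length := by
  obtain ⟨hy0, hpos, hcap, hdem⟩ := hf
  have hs12F : s(1,2) ∈ CG.edgeFinset := by decide
  have hzero : ∀ e ∈ CG.edgeFinset, e ≠ s(1,2) → y r₀ e = 0 := by
    intro e he hne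
    have hsub : ({s(1,2), e} : Finset (Sym2 (Fin 4))) ⊆ CG.edgeFinset := by
      intro x hx
      rcases Finset.mem_insert.1 hx with rfl | hx
      · exact hs12F
      · rwa [Finset.mem_singleton.1 hx]
    have hle : ∑ x ∈ ({s(1,2), e} : Finset (Sym2 (Fin 4))), y r₀ x ≤
        ∑ x ∈ CG.edgeFinset, y r₀ x :=
      Finset.sum_le_sum_of_subset_of_nonneg hsub (fun i _ _ => hy0 r₀ i)
    rw [Finset.sum_pair (Ne.symm hne)] at hle
    have := hcap r₀
    have := hy0 r₀ e
    linarith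
  set n : Fin R → Sym2 (Fin 4) → ℕ := fun r e => ((walk r).edges).count e with hn
  have haux : ∀ r, (walk r).edges.length
        = n r s(0,1) + n r s(1,2) + n r s(2,3) + n r s(0,3) + n r s(0,2) ∧
      (walk r).edges.countP (fun e => decide ((0:Fin 4) ∈ e))
        = n r s(0,1) + n r s(0,3) + n r s(0,2) ∧
      (walk r).edges.countP (fun e => decide ((1:Fin 4) ∈ e))
        = n r s(0,1) + n r s(1,2) ∧
      (walk r).edges.countP (fun e => decide ((2:Fin 4) ∈ e))
        = n r s(1,2) + n r s(2,3) + n r s(0,2) :=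
    fun r => counts_aux _ (fun x hx => (walk r).edges_subset_edgeSet hx)
  have hp1 : ∀ r, (n r s(0,1) + n r s(1,2)) % 2 = 0 := by
    intro r
    have := countP_parity 1 (walk r)
    rw [if_neg (by decide), (haux r).2.2.1] at this
    simpa using this
  have hp2 : ∀ r, (n r s(1,2) + n r s(2,3) + n r s(0,2)) % 2 = 0 := by
    intro r
    have := countP_parity 2 (walk r)
    rw [if_neg (by decide), (haux r).2.2.2] at this
    simpa using this
  have hcover : ∀ e ∈ CG.edgeFinset, ∃ r, r ≠ r₀ ∧ 1 ≤ n r e := by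
    intro e he
    have heS : e ∈ CG.edgeSet := SimpleGraph.mem_edgeFinset.1 he
    have hsum := hdem e heS
    by_cases hee : e = s(1,2)
    · subst hee
      rw [show Dem s(1,2) = 12 by simp [Dem]] at hsum
      rw [← Finset.add_sum_erase _ _ (Finset.mem_univ r₀), h8] at hsum
      have : ∃ r ∈ Finset.univ.erase r₀, 0 < y r s(1,2) := by
        by_contra hall
        push_neg at hall
        have : ∑ r ∈ Finset.univ.erase r₀, y r s(1,2) = 0 :=
          le_antisymm (Finset.sum_nonpos (fun r hr => hall r hr))
            (Finset.sum_nonneg (fun r _ => hy0 r _))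
        linarith
      obtain ⟨r, hr, hrpos⟩ := this
      exact ⟨r, Finset.ne_of_mem_erase hr,
        List.count_pos_iff.2 (hpos r _ hrpos)⟩
    · have hD : Dem e = 1 := by simp [Dem, hee]
      rw [hD] at hsum
      have : ∃ r, 0 < y r e := by
        by_contra hall
        push_neg at hall
        have : ∑ r, y r e = 0 :=
          le_antisymm (Finset.sum_nonpos (fun r _ => hall r))
            (Finset.sum_nonneg (fun r _ => hy0 r _))
        linarith
      obtain ⟨r, hrpos⟩ := this
      refine ⟨r, ?_, List.count_pos_iff.2 (hpos r _ hrpos)⟩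
      rintro rfl
      rw [hzero e he hee] at hrpos
      exact lt_irrefl _ hrpos
  have hlen0 : 3 ≤ (walk r₀).length := by
    have hmem : s(1,2) ∈ (walk r₀).edges := hpos r₀ _ (by rw [h8]; norm_num)
    have h12 : 1 ≤ n r₀ s(1,2) := List.count_pos_iff.2 hmem
    have hne : (walk r₀).edges ≠ [] := by
      intro h; rw [h] at hmem; exact List.not_mem_nil hmem
    have h0 := countP_zero_pos (walk r₀) hne
    rw [(haux r₀).2.1] at h0
    have hl := (haux r₀).1
    rw [SimpleGraph.Walk.length_edges] at hl
    have := hp1 r₀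
    have := hp2 r₀
    omega
  set F := Finset.univ.erase r₀ with hF
  have hsingle : ∀ e ∈ CG.edgeFinset, 1 ≤ ∑ r ∈ F, n r e := by
    intro e he
    obtain ⟨r, hr, hr1⟩ := hcover e he
    exact le_trans hr1
      (Finset.single_le_sum (f := fun r => n r e) (fun i _ => Nat.zero_le _)
        (Finset.mem_erase.2 ⟨hr, Finset.mem_univ r⟩))
  have hevens : 2 ∣ ∑ r ∈ F, (n r s(1,2) + n r s(2,3) + n r s(0,2)) :=
    Finset.dvd_sum (fun r _ => by have := hp2 r; omega)
  have hsum_split : ∑ r ∈ F, (walk r).length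
      = ∑ r ∈ F, n r s(0,1) + ∑ r ∈ F, n r s(1,2) + ∑ r ∈ F, n r s(2,3)
        + ∑ r ∈ F, n r s(0,3) + ∑ r ∈ F, n r s(0,2) := by
    rw [← Finset.sum_add_distrib, ← Finset.sum_add_distrib, ← Finset.sum_add_distrib,
      ← Finset.sum_add_distrib]
    refine Finset.sum_congr rfl (fun r _ => ?_)
    rw [← SimpleGraph.Walk.length_edges]
    exact (haux r).1
  have hsplit2 : ∑ r ∈ F, (n r s(1,2) + n r s(2,3) + n r s(0,2))
      = ∑ r ∈ F, n r s(1,2) + ∑ r ∈ F, n r s(2,3) + ∑ r ∈ F, n r s(0,2) := by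
    rw [← Finset.sum_add_distrib, ← Finset.sum_add_distrib]
  have h01 := hsingle s(0,1) (by decide)
  have h12 := hsingle s(1,2) (by decide)
  have h23 := hsingle s(2,3) (by decide)
  have h03 := hsingle s(0,3) (by decide)
  have h02 := hsingle s(0,2) (by decide)
  have hF6 : 6 ≤ ∑ r ∈ F, (walk r).length := by
    rw [hsplit2] at hevens
    omega
  have : ∑ r, (walk r).length = (walk r₀).length + ∑ r ∈ F, (walk r).length :=
    (Finset.add_sum_erase _ _ (Finset.mem_univ r₀)).symm
  omega

lemma edgeFinset_eq' : CG.edgeFinset = {s(0,1), s(1,2), s(2,3), s(0,3), s(0,2)} := by decide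

lemma walk₁_edges : walk₁.edges = [s(0,1), s(1,2), s(0,2)] := by decide

lemma walk₂_edges : walk₂.edges = [s(0,1), s(1,2), s(2,3), s(0,3), s(0,2), s(0,2)] := by decide

lemma feas : Feasible ![walk₁, walk₂] ![spray₁, spray₂] := by
  refine ⟨?_, ?_, ?_, ?_⟩
  · intro r e
    fin_cases r <;> simp [spray₁, spray₂] <;> split_ifs <;> norm_num
  · intro r e h
    fin_cases r <;> simp [spray₁, spray₂] at h ⊢ <;>
      split_ifs at h with h1 h2 h3 h4 h5 <;>
      simp_all [walk₁_edges, walk₂_edges]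
  · intro r
    fin_cases r <;>
      simp [edgeFinset_eq', spray₁, spray₂, Finset.sum_insert, Finset.mem_insert] <;>
      norm_num
  · intro e he
    have : e = s(0,1) ∨ e = s(1,2) ∨ e = s(2,3) ∨ e = s(0,3) ∨ e = s(0,2) :=
      mem_edgeSet_cases' e he
    rcases this with rfl | rfl | rfl | rfl | rfl <;>
      simp [Fin.sum_univ_two, spray₁, spray₂, Dem] <;> norm_num

lemma cost9 : (∑ r, ((![walk₁, walk₂] : Fin 2 → CG.Walk 0 0) r).length) = 9 := by
  simp [Fin.sum_univ_two]
  rfl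


/-- The exhibited two-robot solution, in which robot 1 sprays the full capacity `8` on
the paper's edge `{2,3}` (here `{1,2}`), is feasible and has cost `3 + 6 = 9`; and `9`
is the least cost among all feasible solutions with some robot spraying exactly `8` on
that edge. -/
theorem counterexample_full_capacity_min_cost_nine :
    Feasible ![walk₁, walk₂] ![spray₁, spray₂] ∧
    (![spray₁, spray₂] : Fin 2 → Sym2 (Fin 4) → ℝ) 0 s(1, 2) = 8 ∧
    (∑ r, ((![walk₁, walk₂] : Fin 2 → CG.Walk 0 0) r).length) = 9 ∧
    IsLeast {c : ℕ | ∃ (R : ℕ) (walk : Fin R → CG.Walk 0 0)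
        (y : Fin R → Sym2 (Fin 4) → ℝ),
      Feasible walk y ∧ (∃ r, y r s(1, 2) = 8) ∧ ∑ r, (walk r).length = c} 9 := by
  refine ⟨feas, by simp [spray₁], cost9, ⟨2, ![walk₁, walk₂], ![spray₁, spray₂], feas,
    ⟨0, by simp [spray₁]⟩, cost9⟩, ?_⟩
  rintro c ⟨R, walk, y, hf, ⟨r, h8⟩, rfl⟩
  exact lower_bound walk y hf r h8
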